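/- Let K1, K2, K3 : ℕ → ℝ with Ki(n) > 0 for all i ∈ {1,2,3} and all n, and let (a_n) be the paper's auxiliary sequence a associated with K1, K2, K3. Then for every n ≥ 2, a_n − [(n − 1 + K1(n−1))/(n − 1 + K1(n−1) + K2(n−1))]·K3(n−1)·a_{n−1} > 0. -/
import Mathlib


open Finset

/-- Inequality (A4) of the paper: for positive rates, for every `n ≥ 2`,
`a_n − [(n−1+K1(n−1))/(n−1+K1(n−1)+K2(n−1))]·K3(n−1)·a_{n−1} > 0`. -/
theorem aux_a_gap_pos (K1 K2 K3 a : ℕ → ℝ)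
    (hK1 : ∀ n : ℕ, 0 < K1 n) (hK2 : ∀ n : ℕ, 0 < K2 n) (hK3 : ∀ n : ℕ, 0 < K3 n)
    (ha1 : a 1 = K3 0)
    (haRec : ∀ n : ℕ, 2 ≤ n →
      a n = K3 (n - 1) * a (n - 1)
        + K3 (n - 1) * ∑ i ∈ Finset.Icc 1 (n - 2), K2 i * a i *
            ∏ j ∈ Finset.Icc (i + 1) (n - 2), ((j : ℝ) + K1 j + K2 j)
        + K3 (n - 1) * K2 0 * ∏ i ∈ Finset.Icc 1 (n - 2), ((i : ℝ) + K1 i + K2 i)) :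
    ∀ n : ℕ, 2 ≤ n →
      0 < a n - (((n : ℝ) - 1 + K1 (n - 1)) / ((n : ℝ) - 1 + K1 (n - 1) + K2 (n - 1)))
        * K3 (n - 1) * a (n - 1) := by
  have prodpos : ∀ s : Finset ℕ, 0 < ∏ j ∈ s, ((j : ℝ) + K1 j + K2 j) := by
    intro s
    apply Finset.prod_pos
    intro j _
    have := hK1 j; have := hK2 j
    positivity
  have apos : ∀ n, 1 ≤ n → 0 < a n := by
    intro n
    induction n using Nat.strong_induction_on with
    | _ n ih =>
      intro hn
      rcases eq_or_lt_of_le hn with h | h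
      · rw [← h, ha1]; exact hK3 0
      · have h2 : 2 ≤ n := h
        rw [haRec n h2]
        have hprev : 0 < a (n - 1) := ih (n - 1) (by omega) (by omega)
        have hsum : 0 ≤ ∑ i ∈ Finset.Icc 1 (n - 2), K2 i * a i *
            ∏ j ∈ Finset.Icc (i + 1) (n - 2), ((j : ℝ) + K1 j + K2 j) := by
          apply Finset.sum_nonneg
          intro i hi
          obtain ⟨hi1, hi2⟩ := Finset.mem_Icc.mp hi
          have hai : 0 < a i := ih i (by omega) hi1
          have := hK2 i
          have := prodpos (Finset.Icc (i + 1) (n - 2))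
          positivity
        have h1 : 0 < K3 (n - 1) * a (n - 1) := mul_pos (hK3 _) hprev
        have h2' : 0 ≤ K3 (n - 1) * ∑ i ∈ Finset.Icc 1 (n - 2), K2 i * a i *
            ∏ j ∈ Finset.Icc (i + 1) (n - 2), ((j : ℝ) + K1 j + K2 j) :=
          mul_nonneg (hK3 _).le hsum
        have h3 : 0 < K3 (n - 1) * K2 0 * ∏ i ∈ Finset.Icc 1 (n - 2), ((i : ℝ) + K1 i + K2 i) :=
          mul_pos (mul_pos (hK3 _) (hK2 0)) (prodpos _)
        linarith
  intro n hn
  have hprev : 0 < a (n - 1) := apos (n - 1) (by omega)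
  have hn1 : (1 : ℝ) ≤ (n : ℝ) - 1 := by
    have : (2 : ℝ) ≤ (n : ℝ) := by exact_mod_cast hn
    linarith
  have hnum : 0 < (n : ℝ) - 1 + K1 (n - 1) := by have := hK1 (n - 1); linarith
  have hden : 0 < (n : ℝ) - 1 + K1 (n - 1) + K2 (n - 1) := by have := hK2 (n - 1); linarith
  have hc : ((n : ℝ) - 1 + K1 (n - 1)) / ((n : ℝ) - 1 + K1 (n - 1) + K2 (n - 1)) < 1 := by
    rw [div_lt_one hden]; have := hK2 (n - 1); linarith
  have hc0 : 0 ≤ ((n : ℝ) - 1 + K1 (n - 1)) / ((n : ℝ) - 1 + K1 (n - 1) + K2 (n - 1)) :=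
    div_nonneg hnum.le hden.le
  have hKa : 0 < K3 (n - 1) * a (n - 1) := mul_pos (hK3 _) hprev
  have hlt : (((n : ℝ) - 1 + K1 (n - 1)) / ((n : ℝ) - 1 + K1 (n - 1) + K2 (n - 1)))
      * K3 (n - 1) * a (n - 1) < K3 (n - 1) * a (n - 1) := by
    rw [mul_assoc]
    calc _ < 1 * (K3 (n - 1) * a (n - 1)) := by
          exact mul_lt_mul_of_pos_right hc hKa
      _ = K3 (n - 1) * a (n - 1) := one_mul _
  rw [haRec n hn]
  have hsum : 0 ≤ ∑ i ∈ Finset.Icc 1 (n - 2), K2 i * a i *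
      ∏ j ∈ Finset.Icc (i + 1) (n - 2), ((j : ℝ) + K1 j + K2 j) := by
    apply Finset.sum_nonneg
    intro i hi
    obtain ⟨hi1, hi2⟩ := Finset.mem_Icc.mp hi
    have hai : 0 < a i := apos i hi1
    have := hK2 i
    have := prodpos (Finset.Icc (i + 1) (n - 2))
    positivity
  have h2' : 0 ≤ K3 (n - 1) * ∑ i ∈ Finset.Icc 1 (n - 2), K2 i * a i *
      ∏ j ∈ Finset.Icc (i + 1) (n - 2), ((j : ℝ) + K1 j + K2 j) :=
    mul_nonneg (hK3 _).le hsum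
  have h3 : 0 < K3 (n - 1) * K2 0 * ∏ i ∈ Finset.Icc 1 (n - 2), ((i : ℝ) + K1 i + K2 i) :=
    mul_pos (mul_pos (hK3 _) (hK2 0)) (prodpos _)
  linarith
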